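/- Assume Hypotheses 1, 2 and 3. Then there is at most one continuous monotone solution of the stationary master equation; moreover, if such a solution exists, it is a monotone map on O_d. -/

import Mathlib

open scoped RealInnerProductSpace
open MeasureTheory
set_option maxHeartbeats 2000000
noncomputable section

/-- `ℝ^d` with the Euclidean inner product. -/
abbrev Euc (d : ℕ) := EuclideanSpace ℝ (Fin d)

/-- The positive orthant `O_d = (ℝ≥0)^d`. -/
def Od (d : ℕ) : Set (Euc d) := {x | ∀ i, 0 ≤ x i}

/-- `B_R = {x ∈ O_d : x_1 + ... + x_d ≤ R}`. -/
def Ball1 (d : ℕ) (R : ℝ) : Set (Euc d) := {x | x ∈ Od d ∧ ∑ i, x i ≤ R}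

lemma norm_le_of_mem_ball1 {d : ℕ} {R : ℝ} {x : Euc d} (hx : x ∈ Ball1 d R) : ‖x‖ ≤ |R| := by
  obtain ⟨h1, h2⟩ := hx
  have h0 : 0 ≤ ∑ i, x i := Finset.sum_nonneg fun i _ => h1 i
  rw [EuclideanSpace.norm_eq]
  have : ∑ i, ‖x i‖ ^ 2 ≤ (∑ i, x i) ^ 2 := by
    calc ∑ i, ‖x i‖ ^ 2 = ∑ i, (x i) ^ 2 := by
          simp [Real.norm_eq_abs, sq_abs]
      _ ≤ (∑ i, x i) ^ 2 := Finset.sum_sq_le_sq_sum_of_nonneg fun i _ => h1 i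
  calc Real.sqrt (∑ i, ‖x i‖ ^ 2) ≤ Real.sqrt ((∑ i, x i) ^ 2) := Real.sqrt_le_sqrt this
    _ = ∑ i, x i := by rw [Real.sqrt_sq h0]
    _ ≤ |R| := h2.trans (le_abs_self R)

lemma isCompact_ball1 {d : ℕ} (R : ℝ) : IsCompact (Ball1 d R) := by
  have hclosed : IsClosed (Ball1 d R) := by
    have h1 : IsClosed {x : Euc d | ∀ i, 0 ≤ x i} := by
      have : {x : Euc d | ∀ i, 0 ≤ x i} = ⋂ i, {x : Euc d | 0 ≤ x i} := by
        ext x; simp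
      rw [this]
      exact isClosed_iInter fun i =>
        isClosed_le continuous_const (EuclideanSpace.proj i).continuous
    have h2 : IsClosed {x : Euc d | ∑ i, x i ≤ R} := by
      exact isClosed_le (continuous_finset_sum _ fun i _ => (EuclideanSpace.proj i).continuous) continuous_const
    exact h1.inter h2
  exact (isCompact_closedBall (0:Euc d) |R|).of_isClosed_subset hclosed
    (fun x hx => by simpa [Metric.mem_closedBall, dist_eq_norm] using norm_le_of_mem_ball1 hx)



/-- linear functional `w ↦ ⟪p.1, w.1⟫ + ⟪p.2, w.2⟫` -/
def LpFun {d : ℕ} (p : Euc d × Euc d) : (Euc d × Euc d) →L[ℝ] ℝ :=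
  ((innerSL ℝ p.1).comp (ContinuousLinearMap.fst ℝ (Euc d) (Euc d))) +
  ((innerSL ℝ p.2).comp (ContinuousLinearMap.snd ℝ (Euc d) (Euc d)))

lemma LpFun_apply {d : ℕ} (p w : Euc d × Euc d) :
    LpFun p w = ⟪p.1, w.1⟫ + ⟪p.2, w.2⟫ := rfl

lemma LpFun_cont {d : ℕ} : Continuous fun q : (Euc d × Euc d) × (Euc d × Euc d) => LpFun q.1 q.2 := by
  simp only [LpFun_apply]
  exact (continuous_fst.fst.inner continuous_snd.fst).add (continuous_fst.snd.inner continuous_snd.snd)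

lemma stegall {d : ℕ} (K : Set (Euc d × Euc d)) (hK : IsCompact K) (hne : K.Nonempty)
    (f : Euc d × Euc d → ℝ) (hf : ContinuousOn f K) {ε : ℝ} (hε : 0 < ε) :
    ∃ w : Euc d × Euc d, ‖w.1‖ ≤ ε ∧ ‖w.2‖ ≤ ε ∧ ∃ p₀ ∈ K,
      ∀ p ∈ K, p ≠ p₀ → f p₀ - LpFun p₀ w < f p - LpFun p w := by
  -- the perturbed minimum value function
  set g : (Euc d × Euc d) → ℝ := fun w => sInf ((fun p => f p - LpFun p w) '' K) with hg
  have hcont : ∀ w : Euc d × Euc d, ContinuousOn (fun p => f p - LpFun p w) K :=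
    fun w => hf.sub ((LpFun_cont.comp (continuous_id.prodMk continuous_const)).continuousOn)
  have hmin : ∀ w : Euc d × Euc d, ∃ p ∈ K, (∀ q ∈ K, f p - LpFun p w ≤ f q - LpFun q w)
      ∧ g w = f p - LpFun p w := by
    intro w
    obtain ⟨p, hpK, hp⟩ := hK.exists_isMinOn hne (hcont w)
    have hp' : ∀ q ∈ K, f p - LpFun p w ≤ f q - LpFun q w := fun q hq => hp hq
    refine ⟨p, hpK, hp', ?_⟩
    exact (IsLeast.csInf_eq ⟨Set.mem_image_of_mem _ hpK, by rintro v ⟨q, hqK, rfl⟩; exact hp' q hqK⟩)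
  -- bound on K
  obtain ⟨C0, hC0⟩ := hK.isBounded.subset_closedBall 0
  set C : ℝ := max C0 0 with hC
  have hCnn : 0 ≤ C := le_max_right _ _
  have hKB : ∀ p ∈ K, ‖p.1‖ ≤ C ∧ ‖p.2‖ ≤ C := by
    intro p hp
    have : ‖p‖ ≤ C0 := by simpa [Metric.mem_closedBall, dist_eq_norm] using hC0 hp
    exact ⟨(norm_fst_le p).trans (this.trans (le_max_left _ _)),
      (norm_snd_le p).trans (this.trans (le_max_left _ _))⟩
  have hLpbound : ∀ p ∈ K, ∀ u : Euc d × Euc d, |LpFun p u| ≤ 2 * C * ‖u‖ := by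
    intro p hp u
    rw [LpFun_apply]
    have h1 := abs_real_inner_le_norm p.1 u.1
    have h2 := abs_real_inner_le_norm p.2 u.2
    have := (abs_add_le (⟪p.1, u.1⟫) (⟪p.2, u.2⟫))
    have hu1 : ‖u.1‖ ≤ ‖u‖ := norm_fst_le u
    have hu2 : ‖u.2‖ ≤ ‖u‖ := norm_snd_le u
    have hp1 := (hKB p hp).1
    have hp2 := (hKB p hp).2
    nlinarith [norm_nonneg u, norm_nonneg u.1, norm_nonneg u.2, norm_nonneg p.1, norm_nonneg p.2]
  -- g is Lipschitz
  have hgl : LipschitzWith (Real.toNNReal (2 * C)) g := by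
    apply LipschitzWith.of_dist_le_mul
    intro w w'
    have key : ∀ a b : Euc d × Euc d, g a - g b ≤ 2 * C * dist a b := by
      intro a b
      obtain ⟨p, hpK, hp, hgb⟩ := hmin b
      obtain ⟨q, hqK, hq, hga⟩ := hmin a
      have h1 : g a ≤ f p - LpFun p a := hga ▸ hq p hpK
      have h2 : LpFun p b - LpFun p a ≤ 2 * C * dist a b := by
        have := hLpbound p hpK (b - a)
        rw [map_sub] at this
        rw [dist_eq_norm]
        have habs : |LpFun p b - LpFun p a| ≤ 2 * C * ‖b - a‖ := this
        have : ‖b - a‖ = ‖a - b‖ := norm_sub_rev _ _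
        calc LpFun p b - LpFun p a ≤ |LpFun p b - LpFun p a| := le_abs_self _
          _ ≤ 2 * C * ‖b - a‖ := habs
          _ = 2 * C * ‖a - b‖ := by rw [norm_sub_rev]
      linarith [hgb]
    rw [Real.dist_eq, Real.coe_toNNReal _ (by positivity)]
    rw [abs_sub_le_iff]
    constructor
    · linarith [key w w']
    · have := key w' w
      rw [dist_comm w' w] at this
      linarith
  -- Rademacher
  haveI hinst : (volume : Measure (Euc d × Euc d)).IsAddHaarMeasure := by
    have he : (volume : Measure (Euc d × Euc d)) = (volume : Measure (Euc d)).prod volume := rfl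
    rw [he]; exact Measure.prod.instIsAddHaarMeasure _ _
  have hae : ∀ᵐ w : Euc d × Euc d ∂volume, DifferentiableAt ℝ g w := hgl.ae_differentiableAt
  have hball : (volume (Metric.ball (0 : Euc d × Euc d) ε)) ≠ 0 :=
    (Metric.measure_ball_pos volume 0 hε).ne'
  have hex : ∃ w ∈ Metric.ball (0 : Euc d × Euc d) ε, DifferentiableAt ℝ g w := by
    by_contra h
    push_neg at h
    have hsub : Metric.ball (0 : Euc d × Euc d) ε ⊆ {w | ¬ DifferentiableAt ℝ g w} :=
      fun w hw => h w hw
    exact hball (measure_mono_null hsub (ae_iff.1 hae))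
  obtain ⟨w, hwball, hdiff⟩ := hex
  have hwn : ‖w‖ < ε := by simpa [Metric.mem_ball, dist_eq_norm] using hwball
  -- every minimizer at w determines the derivative of g
  have hfder : ∀ p ∈ K, (∀ q ∈ K, f p - LpFun p w ≤ f q - LpFun q w) →
      fderiv ℝ g w = -(LpFun p) := by
    intro p hpK hp
    have hgw : g w = f p - LpFun p w :=
      (IsLeast.csInf_eq ⟨Set.mem_image_of_mem _ hpK, by rintro v ⟨q, hqK, rfl⟩; exact hp q hqK⟩)
    set φ : (Euc d × Euc d) → ℝ := fun u => g (w + u) + LpFun p u with hφ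
    have hle : ∀ u, φ u ≤ φ 0 := by
      intro u
      obtain ⟨q, hqK, hq, hgq⟩ := hmin (w + u)
      have h1 : g (w + u) ≤ f p - LpFun p (w + u) := by
        rw [hgq]; exact hq p hpK
      have h2 : LpFun p (w + u) = LpFun p w + LpFun p u := map_add _ _ _
      simp only [hφ, add_zero, map_zero]
      linarith [hgw]
    have hmax : IsLocalMax φ 0 := by
      apply IsMaxOn.isLocalMax (s := Set.univ) _ Filter.univ_mem
      intro u _
      exact hle u
    have h1 : HasFDerivAt (fun u : Euc d × Euc d => w + u)
        (ContinuousLinearMap.id ℝ (Euc d × Euc d)) 0 := by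
      simpa using (hasFDerivAt_id (0 : Euc d × Euc d)).const_add w
    have h2' : HasFDerivAt g (fderiv ℝ g w) (w + 0) := by
      rw [add_zero]; exact hdiff.hasFDerivAt
    have h3 : HasFDerivAt (fun u : Euc d × Euc d => g (w + u))
        ((fderiv ℝ g w).comp (ContinuousLinearMap.id ℝ (Euc d × Euc d))) 0 :=
      HasFDerivAt.comp 0 h2' h1
    have h4 : HasFDerivAt φ
        ((fderiv ℝ g w).comp (ContinuousLinearMap.id ℝ (Euc d × Euc d)) + LpFun p) 0 :=
      h3.add (LpFun p).hasFDerivAt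
    have h5 := hmax.hasFDerivAt_eq_zero h4
    rw [ContinuousLinearMap.comp_id] at h5
    exact eq_neg_of_add_eq_zero_left h5
  obtain ⟨p₀, hp₀K, hp₀, hg₀⟩ := hmin w
  refine ⟨w, (norm_fst_le w).trans hwn.le, (norm_snd_le w).trans hwn.le, p₀, hp₀K, ?_⟩
  intro p hpK hne'
  rcases lt_or_ge (f p₀ - LpFun p₀ w) (f p - LpFun p w) with h | h
  · exact h
  exfalso
  have heq : f p - LpFun p w = f p₀ - LpFun p₀ w := le_antisymm h (hp₀ p hpK)
  have hpmin : ∀ q ∈ K, f p - LpFun p w ≤ f q - LpFun q w := by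
    intro q hq; rw [heq]; exact hp₀ q hq
  have e1 := hfder p hpK hpmin
  have e2 := hfder p₀ hp₀K hp₀
  have e3 : LpFun p = LpFun p₀ := by
    have := e1.symm.trans e2
    exact neg_injective this
  have e4 : ∀ u : Euc d × Euc d, LpFun p u = LpFun p₀ u := fun u => by rw [e3]
  apply hne'
  have hfst : p.1 = p₀.1 := by
    have := e4 (p.1 - p₀.1, 0)
    simp only [LpFun_apply, inner_zero_right, add_zero] at this
    have : ⟪p.1 - p₀.1, p.1 - p₀.1⟫ = 0 := by
      rw [inner_sub_left]; linarith
    exact sub_eq_zero.1 (inner_self_eq_zero.1 this)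
  have hsnd : p.2 = p₀.2 := by
    have := e4 (0, p.2 - p₀.2)
    simp only [LpFun_apply, inner_zero_right, zero_add] at this
    have : ⟪p.2 - p₀.2, p.2 - p₀.2⟫ = 0 := by
      rw [inner_sub_left]; linarith
    exact sub_eq_zero.1 (inner_self_eq_zero.1 this)
  exact Prod.ext hfst hsnd


lemma inner_shift {d : ℕ} (u v c z y : Euc d) :
    ⟪u - (v + c), z - y⟫ = ⟪u - v, z - y⟫ - ⟪z, c⟫ + ⟪y, c⟫ := by
  simp only [inner_sub_left, inner_sub_right, inner_add_left]
  rw [real_inner_comm z c, real_inner_comm y c]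
  ring

lemma inner_flip {d : ℕ} (u v s t : Euc d) : ⟪u - v, s - t⟫ = ⟪v - u, t - s⟫ := by
  rw [← inner_neg_neg (𝕜 := ℝ)]; simp [neg_sub]

/-- Monotone solution of the stationary master equation (Definition 2.1), with threshold
`R₁ ≥ R₀` where `R₀` is the constant of Hypothesis 2. -/
def IsMonotoneSolS (d : ℕ) (F G : Euc d → Euc d → Euc d) (r lam : ℝ)
    (T : Euc d →L[ℝ] Euc d) (R₀ : ℝ) (U : Euc d → Euc d) : Prop :=
  ContinuousOn U (Od d) ∧
  ∃ R₁ ≥ R₀, ∀ R ≥ R₁, ∀ V : Euc d, ∀ y ∈ Od d, ∀ x₀ ∈ Ball1 d R,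
    (∀ x ∈ Ball1 d R, x ≠ x₀ → ⟪U x₀ - V, x₀ - y⟫ < ⟪U x - V, x - y⟫) →
    ⟪G x₀ (U x₀), x₀ - y⟫ + ⟪F x₀ (U x₀), U x₀ - V⟫ ≤
      r * ⟪U x₀, x₀ - y⟫
        + lam * ⟪U x₀ - ContinuousLinearMap.adjoint T (U (T x₀)), x₀ - y⟫

lemma key_cross {d : ℕ} (F G : Euc d → Euc d → Euc d)
    (hFc : Continuous fun q : Euc d × Euc d => F q.1 q.2)
    (r lam : ℝ) (hr : 0 < r) (hlam : 0 ≤ lam) (T : Euc d →L[ℝ] Euc d)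
    (R₀ : ℝ)
    (hyp2T : ∀ R ≥ R₀, ∀ x ∈ Ball1 d R, T x ∈ Ball1 d R)
    (hyp3 : ∀ x ∈ Od d, ∀ y ∈ Od d, ∀ p q : Euc d,
      0 ≤ ⟪G x p - G y q, x - y⟫ + ⟪F x p - F y q, p - q⟫)
    (U V : Euc d → Euc d)
    (hU : IsMonotoneSolS d F G r lam T R₀ U) (hV : IsMonotoneSolS d F G r lam T R₀ V) :
    ∀ x ∈ Od d, ∀ y ∈ Od d, 0 ≤ ⟪U x - V y, x - y⟫ := by
  obtain ⟨hUc, RU, hRU, hUsol⟩ := hU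
  obtain ⟨hVc, RV, hRV, hVsol⟩ := hV
  intro x hx y hy
  set R : ℝ := max (max RU RV) (max (∑ i, x i) (∑ i, y i)) with hRdef
  have hRRU : RU ≤ R := le_trans (le_max_left _ _) (le_max_left _ _)
  have hRRV : RV ≤ R := le_trans (le_max_right _ _) (le_max_left _ _)
  have hRR₀ : R₀ ≤ R := le_trans hRU hRRU
  have hxK : x ∈ Ball1 d R := ⟨hx, le_trans (le_max_left _ _) (le_max_right _ _)⟩
  have hyK : y ∈ Ball1 d R := ⟨hy, le_trans (le_max_right _ _) (le_max_right _ _)⟩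
  have hKsub : Ball1 d R ⊆ Od d := fun z hz => hz.1
  have hKc : IsCompact (Ball1 d R) := isCompact_ball1 R
  have hKpc : IsCompact (Ball1 d R ×ˢ Ball1 d R) := hKc.prod hKc
  have hKpne : (Ball1 d R ×ˢ Ball1 d R).Nonempty := ⟨(x, y), ⟨hxK, hyK⟩⟩
  set W : Euc d × Euc d → ℝ := fun p => ⟪U p.1 - V p.2, p.1 - p.2⟫ with hWdef
  have hUK : ContinuousOn U (Ball1 d R) := hUc.mono hKsub
  have hVK : ContinuousOn V (Ball1 d R) := hVc.mono hKsub
  have hU1 : ContinuousOn (fun p : Euc d × Euc d => U p.1) (Ball1 d R ×ˢ Ball1 d R) :=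
    hUK.comp continuous_fst.continuousOn (fun p hp => hp.1)
  have hV2 : ContinuousOn (fun p : Euc d × Euc d => V p.2) (Ball1 d R ×ˢ Ball1 d R) :=
    hVK.comp continuous_snd.continuousOn (fun p hp => hp.2)
  have hWc : ContinuousOn W (Ball1 d R ×ˢ Ball1 d R) :=
    ContinuousOn.inner (hU1.sub hV2) (continuous_fst.sub continuous_snd).continuousOn
  have hB : ∀ z ∈ Ball1 d R, ‖z‖ ≤ |R| := fun z hz => norm_le_of_mem_ball1 hz
  have hFFc : ContinuousOn (fun p : Euc d × Euc d => ‖F p.1 (U p.1)‖ + ‖F p.2 (V p.2)‖)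
      (Ball1 d R ×ˢ Ball1 d R) := by
    apply ContinuousOn.add
    · exact ((hFc.comp_continuousOn (continuous_fst.continuousOn.prodMk hU1)).norm)
    · exact ((hFc.comp_continuousOn (continuous_snd.continuousOn.prodMk hV2)).norm)
  obtain ⟨pm, hpmK, hpm⟩ := hKpc.exists_isMaxOn hKpne hFFc
  set CF : ℝ := ‖F pm.1 (U pm.1)‖ + ‖F pm.2 (V pm.2)‖ with hCFdef
  have hCF : ∀ p ∈ Ball1 d R ×ˢ Ball1 d R, ‖F p.1 (U p.1)‖ + ‖F p.2 (V p.2)‖ ≤ CF :=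
    fun p hp => hpm hp
  have hCFnn : 0 ≤ CF := add_nonneg (norm_nonneg _) (norm_nonneg _)
  set Cbig : ℝ := (CF + 4 * lam * |R|) / r + 4 * |R| with hCbigdef
  have hCbignn : 0 ≤ Cbig := by
    apply add_nonneg
    · apply div_nonneg _ hr.le
      have h4 : (0:ℝ) ≤ 4 * lam * |R| := by positivity
      linarith
    · positivity
  -- main per-ε estimate
  have main : ∀ ε : ℝ, 0 < ε → -(Cbig * ε) ≤ W (x, y) := by
    intro ε hε
    obtain ⟨w, hw1, hw2, p₀, hp₀Kp, hSM⟩ := stegall _ hKpc hKpne W hWc hε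
    obtain ⟨a, b⟩ := w
    obtain ⟨x₀, y₀⟩ := p₀
    simp only at hw1 hw2
    have hx₀K : x₀ ∈ Ball1 d R := hp₀Kp.1
    have hy₀K : y₀ ∈ Ball1 d R := hp₀Kp.2
    have hx₀Od : x₀ ∈ Od d := hKsub hx₀K
    have hy₀Od : y₀ ∈ Od d := hKsub hy₀K
    have NS : ∀ p ∈ Ball1 d R ×ˢ Ball1 d R,
        W (x₀, y₀) - LpFun (x₀, y₀) (a, b) ≤ W p - LpFun p (a, b) := by
      intro p hp
      rcases eq_or_ne p (x₀, y₀) with rfl | h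
      · exact le_refl _
      · exact (hSM p hp h).le
    have hip : ∀ z c : Euc d, z ∈ Ball1 d R → ‖c‖ ≤ ε → |⟪z, c⟫| ≤ |R| * ε := by
      intro z c hz hc
      calc |⟪z, c⟫| ≤ ‖z‖ * ‖c‖ := abs_real_inner_le_norm z c
        _ ≤ |R| * ε := mul_le_mul (hB z hz) hc (norm_nonneg _) (abs_nonneg _)
    have hUstrict : ∀ z ∈ Ball1 d R, z ≠ x₀ →
        ⟪U x₀ - (V y₀ + a), x₀ - y₀⟫ < ⟪U z - (V y₀ + a), z - y₀⟫ := by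
      intro z hz hzx
      have h := hSM (z, y₀) ⟨hz, hy₀K⟩ (by simp [Prod.ext_iff, hzx])
      simp only [hWdef, LpFun_apply] at h
      rw [inner_shift (U x₀) (V y₀) a x₀ y₀, inner_shift (U z) (V y₀) a z y₀]
      linarith
    have IU := hUsol R hRRU (V y₀ + a) y₀ hy₀Od x₀ hx₀K hUstrict
    have hVstrict : ∀ z ∈ Ball1 d R, z ≠ y₀ →
        ⟪V y₀ - (U x₀ + b), y₀ - x₀⟫ < ⟪V z - (U x₀ + b), z - x₀⟫ := by
      intro z hz hzy
      have h := hSM (x₀, z) ⟨hx₀K, hz⟩ (by simp [Prod.ext_iff, hzy])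
      simp only [hWdef, LpFun_apply] at h
      rw [inner_shift (V y₀) (U x₀) b y₀ x₀, inner_shift (V z) (U x₀) b z x₀,
        inner_flip (V y₀) (U x₀) y₀ x₀, inner_flip (V z) (U x₀) z x₀]
      linarith
    have IV := hVsol R hRRV (U x₀ + b) x₀ hx₀Od y₀ hy₀K hVstrict
    -- rewrite the solution inequalities
    have eU1 : ⟪F x₀ (U x₀), U x₀ - (V y₀ + a)⟫ = ⟪F x₀ (U x₀), U x₀ - V y₀⟫ - ⟪F x₀ (U x₀), a⟫ := by
      simp only [inner_sub_right, inner_add_right]; ring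
    have eU2 : ⟪U x₀ - ContinuousLinearMap.adjoint T (U (T x₀)), x₀ - y₀⟫ = ⟪U x₀, x₀ - y₀⟫ - ⟪U (T x₀), T x₀ - T y₀⟫ := by
      rw [inner_sub_left, ContinuousLinearMap.adjoint_inner_left, map_sub]
    rw [eU1, eU2] at IU
    have eV1 : ⟪F y₀ (V y₀), V y₀ - (U x₀ + b)⟫ = -⟪F y₀ (V y₀), U x₀ - V y₀⟫ - ⟪F y₀ (V y₀), b⟫ := by
      simp only [inner_sub_right, inner_add_right]; ring
    have eV2 : ⟪V y₀ - ContinuousLinearMap.adjoint T (V (T y₀)), y₀ - x₀⟫ = -⟪V y₀, x₀ - y₀⟫ + ⟪V (T y₀), T x₀ - T y₀⟫ := by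
      rw [inner_sub_left, ContinuousLinearMap.adjoint_inner_left, map_sub]
      simp only [inner_sub_right]; ring
    have eV3 : ⟪G y₀ (V y₀), y₀ - x₀⟫ = -⟪G y₀ (V y₀), x₀ - y₀⟫ := by
      simp only [inner_sub_right]; ring
    have eV4 : (⟪V y₀, y₀ - x₀⟫ : ℝ) = -⟪V y₀, x₀ - y₀⟫ := by
      simp only [inner_sub_right]; ring
    rw [eV1, eV2, eV3, eV4] at IV
    have h3 := hyp3 x₀ hx₀Od y₀ hy₀Od (U x₀) (V y₀)
    rw [inner_sub_left (𝕜 := ℝ) (G x₀ (U x₀)) (G y₀ (V y₀)),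
      inner_sub_left (𝕜 := ℝ) (F x₀ (U x₀)) (F y₀ (V y₀))] at h3
    -- the T-shift bound
    have hTx : T x₀ ∈ Ball1 d R := hyp2T R hRR₀ x₀ hx₀K
    have hTy : T y₀ ∈ Ball1 d R := hyp2T R hRR₀ y₀ hy₀K
    have hNT := NS (T x₀, T y₀) ⟨hTx, hTy⟩
    simp only [hWdef, LpFun_apply] at hNT
    have ew0 : ⟪U x₀ - V y₀, x₀ - y₀⟫ = ⟪U x₀, x₀ - y₀⟫ - ⟪V y₀, x₀ - y₀⟫ := inner_sub_left _ _ _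
    have ewT : ⟪U (T x₀) - V (T y₀), T x₀ - T y₀⟫ = ⟪U (T x₀), T x₀ - T y₀⟫ - ⟪V (T y₀), T x₀ - T y₀⟫ := inner_sub_left _ _ _
    rw [ew0, ewT] at hNT
    have hWT : (⟪U x₀, x₀ - y₀⟫ - ⟪V y₀, x₀ - y₀⟫) - (⟪U (T x₀), T x₀ - T y₀⟫ - ⟪V (T y₀), T x₀ - T y₀⟫) ≤ 4 * (|R| * ε) := by
      have b1 := abs_le.1 (hip x₀ a hx₀K hw1)
      have b2 := abs_le.1 (hip y₀ b hy₀K hw2)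
      have b3 := abs_le.1 (hip (T x₀) a hTx hw1)
      have b4 := abs_le.1 (hip (T y₀) b hTy hw2)
      linarith [b1.1, b1.2, b2.1, b2.2, b3.1, b3.2, b4.1, b4.2, hNT]
    have lamb : lam * ((⟪U x₀, x₀ - y₀⟫ - ⟪V y₀, x₀ - y₀⟫) - (⟪U (T x₀), T x₀ - T y₀⟫ - ⟪V (T y₀), T x₀ - T y₀⟫)) ≤ lam * (4 * (|R| * ε)) :=
      mul_le_mul_of_nonneg_left hWT hlam
    -- F bounds
    have hCFp := hCF (x₀, y₀) hp₀Kp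
    simp only at hCFp
    have bFu := abs_le.1 ((abs_real_inner_le_norm (F x₀ (U x₀)) a).trans
      (mul_le_mul_of_nonneg_left hw1 (norm_nonneg _)))
    have bFv := abs_le.1 ((abs_real_inner_le_norm (F y₀ (V y₀)) b).trans
      (mul_le_mul_of_nonneg_left hw2 (norm_nonneg _)))
    have hFab : -(CF * ε) ≤ -⟪F x₀ (U x₀), a⟫ - ⟪F y₀ (V y₀), b⟫ := by
      nlinarith [bFu.2, bFv.2, hCFp, hε.le]
    -- combine
    have hmerge : lam * (⟪U x₀, x₀ - y₀⟫ - ⟪U (T x₀), T x₀ - T y₀⟫) + lam * (-⟪V y₀, x₀ - y₀⟫ + ⟪V (T y₀), T x₀ - T y₀⟫)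
        = lam * ((⟪U x₀, x₀ - y₀⟫ - ⟪V y₀, x₀ - y₀⟫) - (⟪U (T x₀), T x₀ - T y₀⟫ - ⟪V (T y₀), T x₀ - T y₀⟫)) := by ring
    have hlin1 : r * ⟪U x₀, x₀ - y₀⟫ + r * -⟪V y₀, x₀ - y₀⟫ = r * (⟪U x₀, x₀ - y₀⟫ - ⟪V y₀, x₀ - y₀⟫) := by ring
    have hmain : -(CF * ε) - lam * (4 * (|R| * ε)) ≤ r * (⟪U x₀, x₀ - y₀⟫ - ⟪V y₀, x₀ - y₀⟫) := by
      linarith [IU, IV, h3, hFab, lamb, hmerge, hlin1]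
    have ht : r * (((CF + 4 * lam * |R|) / r) * ε) = (CF + 4 * lam * |R|) * ε := by
      field_simp
    have hdiv : -(((CF + 4 * lam * |R|) / r) * ε) ≤ ⟪U x₀, x₀ - y₀⟫ - ⟪V y₀, x₀ - y₀⟫ := by
      by_contra hcon
      push_neg at hcon
      have hm := mul_lt_mul_of_pos_left hcon hr
      have hneg : r * -(((CF + 4 * lam * |R|) / r) * ε)
          = -((CF + 4 * lam * |R|) * ε) := by rw [mul_neg, ht]
      rw [hneg] at hm
      nlinarith [hmain, hm]
    -- compare with the target point (x, y)
    have hNxy := NS (x, y) ⟨hxK, hyK⟩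
    simp only [hWdef, LpFun_apply] at hNxy
    rw [ew0] at hNxy
    have c1 := abs_le.1 (hip x₀ a hx₀K hw1)
    have c2 := abs_le.1 (hip y₀ b hy₀K hw2)
    have c3 := abs_le.1 (hip x a hxK hw1)
    have c4 := abs_le.1 (hip y b hyK hw2)
    have hCbig_eq : Cbig * ε = ((CF + 4 * lam * |R|) / r) * ε + 4 * (|R| * ε) := by
      rw [hCbigdef]; ring
    show -(Cbig * ε) ≤ ⟪U x - V y, x - y⟫
    rw [hCbig_eq]
    linarith [hNxy, hdiv, c1.2, c2.2, c3.1, c4.1]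
  -- conclude
  by_contra hneg
  push_neg at hneg
  have hW : W (x, y) = ⟪U x - V y, x - y⟫ := rfl
  have hc1 : (0:ℝ) < Cbig + 1 := by linarith
  have hs : (0:ℝ) < -(⟪U x - V y, x - y⟫) := by linarith
  have h1 := main (-(⟪U x - V y, x - y⟫) / (Cbig + 1)) (div_pos hs hc1)
  rw [hW] at h1
  have hfrac : Cbig / (Cbig + 1) < 1 := (div_lt_one hc1).2 (by linarith)
  have key2 : Cbig * (-(⟪U x - V y, x - y⟫) / (Cbig + 1)) < -(⟪U x - V y, x - y⟫) := by
    calc Cbig * (-(⟪U x - V y, x - y⟫) / (Cbig + 1))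
        = -(⟪U x - V y, x - y⟫) * (Cbig / (Cbig + 1)) := by ring
      _ < -(⟪U x - V y, x - y⟫) * 1 := by exact mul_lt_mul_of_pos_left hfrac hs
      _ = -(⟪U x - V y, x - y⟫) := mul_one _
  linarith [h1, key2]


/-- Theorem 2.1: under Hypotheses 1-3, there is at most one continuous monotone solution of
the stationary master equation; if it exists, it is a monotone map. -/
theorem uniqueness_and_monotonicity_monotone_stationary
    (d : ℕ) (hd : 1 ≤ d)
    (F G : Euc d → Euc d → Euc d)
    (hFc : Continuous fun q : Euc d × Euc d => F q.1 q.2)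
    (hGc : Continuous fun q : Euc d × Euc d => G q.1 q.2)
    (r lam : ℝ) (hr : 0 < r) (hlam : 0 ≤ lam) (T : Euc d →L[ℝ] Euc d)
    -- Hypothesis 1
    (hyp1F : ∀ x ∈ Od d, ∀ p : Euc d, ∀ i, x i = 0 → F x p i ≤ 0)
    (hyp1T : ∀ x ∈ Od d, T x ∈ Od d)
    -- Hypothesis 2
    (R₀ : ℝ) (hR₀ : 0 < R₀)
    (hyp2F : ∀ x ∈ Od d, ∀ p : Euc d, R₀ ≤ ∑ i, x i → 0 ≤ ∑ i, F x p i)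
    (hyp2T : ∀ R ≥ R₀, ∀ x ∈ Ball1 d R, T x ∈ Ball1 d R)
    -- Hypothesis 3
    (hyp3 : ∀ x ∈ Od d, ∀ y ∈ Od d, ∀ p q : Euc d,
      0 ≤ ⟪G x p - G y q, x - y⟫ + ⟪F x p - F y q, p - q⟫) :
    (∀ U V : Euc d → Euc d, IsMonotoneSolS d F G r lam T R₀ U →
        IsMonotoneSolS d F G r lam T R₀ V → ∀ x ∈ Od d, U x = V x) ∧
    (∀ U : Euc d → Euc d, IsMonotoneSolS d F G r lam T R₀ U →
        ∀ x ∈ Od d, ∀ y ∈ Od d, 0 ≤ ⟪U x - U y, x - y⟫) := by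
  constructor
  · intro U V hU hV x hx
    have hUV := key_cross F G hFc r lam hr hlam T R₀ hyp2T hyp3 U V hU hV
    have hVU := key_cross F G hFc r lam hr hlam T R₀ hyp2T hyp3 V U hV hU
    have hUc := hU.1
    have hVc := hV.1
    have hcoord : ∀ (A B : Euc d → Euc d), ContinuousOn B (Od d) →
        (∀ z ∈ Od d, ∀ w ∈ Od d, 0 ≤ ⟪A z - B w, z - w⟫) →
        ∀ i, (A x) i - (B x) i ≤ 0 := by
      intro A B hBc hAB i
      set e : Euc d := EuclideanSpace.single i 1 with he
      have hpath : ∀ t : ℝ, 0 ≤ t → x + t • e ∈ Od d := by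
        intro t ht
        intro j
        have hxj := hx j
        have happ : (x + t • e) j = x j + t * e j := rfl
        rw [happ, he]
        rcases eq_or_ne j i with rfl | hji
        · simp [EuclideanSpace.single_apply]
          positivity
        · simp [EuclideanSpace.single_apply, hji]
          exact hxj
      have hei : ∀ z : Euc d, ⟪z, e⟫ = z i := by
        intro z
        rw [he]
        simp [EuclideanSpace.inner_single_right]
      have hone : ∀ t : ℝ, 0 < t → (A x) i - (B (x + t • e)) i ≤ 0 := by
        intro t ht
        have hyOd : x + t • e ∈ Od d := hpath t ht.le
        have h0 := hAB x hx (x + t • e) hyOd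
        have hxy : x - (x + t • e) = -(t • e) := by abel
        rw [hxy, inner_neg_right, real_inner_smul_right] at h0
        have hinner : ⟪A x - B (x + t • e), e⟫ ≤ 0 := by nlinarith
        rw [hei (A x - B (x + t • e))] at hinner
        have : (A x - B (x + t • e)) i = (A x) i - (B (x + t • e)) i := rfl
        linarith [this ▸ hinner]
      -- limit as t → 0⁺
      have hγ : Filter.Tendsto (fun t : ℝ => x + t • e) (nhdsWithin 0 (Set.Ioi 0))
          (nhdsWithin x (Od d)) := by
        rw [tendsto_nhdsWithin_iff]
        constructor
        · have hc : Continuous (fun t : ℝ => x + t • e) :=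
            continuous_const.add (continuous_id.smul continuous_const)
          have h2 := (hc.tendsto 0).mono_left (nhdsWithin_le_nhds (s := Set.Ioi (0:ℝ)))
          simpa using h2
        · exact eventually_mem_nhdsWithin.mono (fun t ht => hpath t (le_of_lt ht))
      have hBt : Filter.Tendsto (fun t : ℝ => B (x + t • e)) (nhdsWithin 0 (Set.Ioi 0))
          (nhds (B x)) := (hBc x hx).tendsto.comp hγ
      have hBti : Filter.Tendsto (fun t : ℝ => (B (x + t • e)) i) (nhdsWithin 0 (Set.Ioi 0))
          (nhds ((B x) i)) := ((EuclideanSpace.proj i).continuous.tendsto _).comp hBt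
      have hfin : Filter.Tendsto (fun t : ℝ => (A x) i - (B (x + t • e)) i)
          (nhdsWithin 0 (Set.Ioi 0)) (nhds ((A x) i - (B x) i)) :=
        tendsto_const_nhds.sub hBti
      exact le_of_tendsto hfin (eventually_mem_nhdsWithin.mono fun t ht => hone t ht)
    have h1 := hcoord U V hVc hUV
    have h2 := hcoord V U hUc hVU
    ext i
    exact le_antisymm (by linarith [h1 i]) (by linarith [h2 i])
  · intro U hU x hx y hy
    exact key_cross F G hFc r lam hr hlam T R₀ hyp2T hyp3 U U hU hU x hx y hy
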